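/- Best response value (Proposition): let Q be a mixed strategy of Host and let π₁ = Q 0 + Q 1, π₂ = Q 2 + Q 3, π₃ = Q 4 + Q 5 be the probabilities that the car is hidden behind doors 1, 2, 3. Then the maximum of E(P, Q) over all mixed strategies P of Contestant equals 1 − min(π₁, π₂, π₃); that is, E(P, Q) ≤ 1 − min(π₁, π₂, π₃) for every mixed strategy P, and there exists a mixed strategy P with E(P, Q) = 1 − min(π₁, π₂, π₃). -/

import Mathlib

open Finset

/-- Contestant's payoff matrix for the Monty Hall zero-sum game.
Rows: 1SS,1SN,1NS,1NN,2SS,2SN,2NS,2NN,3SS,3SN,3NS,3NN.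
Columns: 1L,1R,2L,2R,3L,3R. -/
def C : Fin 12 → Fin 6 → ℝ :=
  ![![0,0,1,1,1,1],
    ![0,1,0,0,1,1],
    ![1,0,1,1,0,0],
    ![1,1,0,0,0,0],
    ![1,1,0,0,1,1],
    ![0,0,0,1,1,1],
    ![1,1,1,0,0,0],
    ![0,0,1,1,0,0],
    ![1,1,1,1,0,0],
    ![0,0,1,1,0,1],
    ![1,1,0,0,1,0],
    ![0,0,0,0,1,1]]

/-- A mixed strategy for Contestant. -/
def IsMixedC (P : Fin 12 → ℝ) : Prop := (∀ i, 0 ≤ P i) ∧ ∑ i, P i = 1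

/-- A mixed strategy for Host. -/
def IsMixedH (Q : Fin 6 → ℝ) : Prop := (∀ j, 0 ≤ Q j) ∧ ∑ j, Q j = 1

/-- Expected payoff (Contestant's winning probability) under profile (P,Q). -/
def E (P : Fin 12 → ℝ) (Q : Fin 6 → ℝ) : ℝ := ∑ i, ∑ j, P i * C i j * Q j

/-- Best response value: the maximal winning probability against Host's Q
equals 1 − min(π₁, π₂, π₃), where π_X is the probability of door X hiding the car. -/
lemma v0 (a b c d e f : ℝ) : (![a,b,c,d,e,f] : Fin 6 → ℝ) 0 = a := rfl
lemma v1 (a b c d e f : ℝ) : (![a,b,c,d,e,f] : Fin 6 → ℝ) 1 = b := rfl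
lemma v2 (a b c d e f : ℝ) : (![a,b,c,d,e,f] : Fin 6 → ℝ) 2 = c := rfl
lemma v3 (a b c d e f : ℝ) : (![a,b,c,d,e,f] : Fin 6 → ℝ) 3 = d := rfl
lemma v4 (a b c d e f : ℝ) : (![a,b,c,d,e,f] : Fin 6 → ℝ) 4 = e := rfl
lemma v5 (a b c d e f : ℝ) : (![a,b,c,d,e,f] : Fin 6 → ℝ) 5 = f := rfl

theorem best_response_value :
    ∀ Q : Fin 6 → ℝ, IsMixedH Q →
      (∀ P : Fin 12 → ℝ, IsMixedC P →
        E P Q ≤ 1 - min (min (Q 0 + Q 1) (Q 2 + Q 3)) (Q 4 + Q 5)) ∧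
      (∃ P : Fin 12 → ℝ, IsMixedC P ∧
        E P Q = 1 - min (min (Q 0 + Q 1) (Q 2 + Q 3)) (Q 4 + Q 5)) := by
  intro Q hQ
  obtain ⟨hQ0, hQs⟩ := hQ
  rw [Fin.sum_univ_six] at hQs
  set M := min (min (Q 0 + Q 1) (Q 2 + Q 3)) (Q 4 + Q 5) with hM
  have hM1 : M ≤ Q 0 + Q 1 := le_trans (min_le_left _ _) (min_le_left _ _)
  have hM2 : M ≤ Q 2 + Q 3 := le_trans (min_le_left _ _) (min_le_right _ _)
  have hM3 : M ≤ Q 4 + Q 5 := min_le_right _ _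
  constructor
  · intro P hP
    obtain ⟨hP0, hPs⟩ := hP
    have hrow : ∀ i, (∑ j, C i j * Q j) ≤ 1 - M := by
      intro i
      fin_cases i <;>
        simp only [C, Fin.sum_univ_six, Matrix.cons_val_zero', Matrix.cons_val_succ',
          Matrix.cons_val_zero, Matrix.cons_val_one, Matrix.head_cons, Matrix.cons_val_succ] <;> norm_num [v2, v3, v4, v5] <;>
        linarith [hQ0 0, hQ0 1, hQ0 2, hQ0 3, hQ0 4, hQ0 5]
    have hE : E P Q = ∑ i, P i * ∑ j, C i j * Q j := by
      unfold E
      congr 1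
      ext i
      rw [Finset.mul_sum]
      congr 1; ext j; ring
    rw [hE]
    calc ∑ i, P i * ∑ j, C i j * Q j ≤ ∑ i, P i * (1 - M) := by
          apply Finset.sum_le_sum
          intro i _
          exact mul_le_mul_of_nonneg_left (hrow i) (hP0 i)
      _ = 1 - M := by rw [← Finset.sum_mul, hPs, one_mul]
  · have hE' : ∀ k : Fin 12, E (fun i => if i = k then 1 else 0) Q = ∑ j, C k j * Q j := by
      intro k
      unfold E
      rw [Finset.sum_eq_single k]
      · simp
      · intro b _ hb; simp [hb]
      · simp
    have hmix : ∀ k : Fin 12, IsMixedC (fun i => if i = k then 1 else 0) := by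
      intro k
      refine ⟨fun i => by positivity, ?_⟩
      simp
    have hC0 : C 0 = (![0,0,1,1,1,1] : Fin 6 → ℝ) := rfl
    have hC4 : C 4 = (![1,1,0,0,1,1] : Fin 6 → ℝ) := rfl
    have hC8 : C 8 = (![1,1,1,1,0,0] : Fin 6 → ℝ) := rfl
    have r0 : (∑ j, C 0 j * Q j) = Q 2 + Q 3 + Q 4 + Q 5 := by
      rw [Fin.sum_univ_six]
      norm_num [hC0, hC4, hC8, v2, v3, v4, v5, Matrix.cons_val_zero, Matrix.cons_val_one, Matrix.head_cons]
    have r4 : (∑ j, C 4 j * Q j) = Q 0 + Q 1 + Q 4 + Q 5 := by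
      rw [Fin.sum_univ_six]
      norm_num [hC0, hC4, hC8, v2, v3, v4, v5, Matrix.cons_val_zero, Matrix.cons_val_one, Matrix.head_cons]
    have r8 : (∑ j, C 8 j * Q j) = Q 0 + Q 1 + Q 2 + Q 3 := by
      rw [Fin.sum_univ_six]
      norm_num [hC0, hC4, hC8, v2, v3, v4, v5, Matrix.cons_val_zero, Matrix.cons_val_one, Matrix.head_cons]
    obtain h | h := le_total (min (Q 0 + Q 1) (Q 2 + Q 3)) (Q 4 + Q 5)
    · rw [hM, min_eq_left h]
      obtain h2 | h2 := le_total (Q 0 + Q 1) (Q 2 + Q 3)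
      · rw [min_eq_left h2]
        exact ⟨_, hmix 0, by rw [hE' 0, r0]; linarith⟩
      · rw [min_eq_right h2]
        exact ⟨_, hmix 4, by rw [hE' 4, r4]; linarith⟩
    · rw [hM, min_eq_right h]
      exact ⟨_, hmix 8, by rw [hE' 8, r8]; linarith⟩
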